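/- (Minimum-maximum principle) Let S : R^{r+1} -> R be a C^2 local energy of range r satisfying: S(ξ) = Σ_{j=1}^r f_j(ξ_1, ξ_{j+1}) where each f_j is C^2 with mixed second partial derivative ∂_1∂_2 f_j ≤ -λ < 0 everywhere. For sequences x, y : Z -> R define M_i = max(x_i, y_i) and m_i = min(x_i, y_i), and for a finite interval B of Z define W_B(z) = Σ_{i∈B} S(z_i, ..., z_{i+r}). Then W_B(x) + W_B(y) ≥ W_B(M) + W_B(m). -/

import Mathlib

open Finset Filter Topology

noncomputable def d1 (f : ℝ → ℝ → ℝ) (ν μ : ℝ) : ℝ := deriv (fun t => f t μ) ν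
noncomputable def d2 (f : ℝ → ℝ → ℝ) (ν μ : ℝ) : ℝ := deriv (fun t => f ν t) μ
noncomputable def d11 (f : ℝ → ℝ → ℝ) (ν μ : ℝ) : ℝ := deriv (fun t => d1 f t μ) ν
noncomputable def d12 (f : ℝ → ℝ → ℝ) (ν μ : ℝ) : ℝ := deriv (fun t => d2 f t μ) ν
noncomputable def d22 (f : ℝ → ℝ → ℝ) (ν μ : ℝ) : ℝ := deriv (fun t => d2 f ν t) μ

/-- The local energy at site `i` of the sequence `z`:  `S_i(z) = ∑_{j=1}^r f_j(z_i, z_{i+j})`. -/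
noncomputable def siteE (r : ℕ) (f : ℕ → ℝ → ℝ → ℝ) (z : ℤ → ℝ) (i : ℤ) : ℝ :=
  ∑ j ∈ Finset.Icc 1 r, f j (z i) (z (i + j))

/-- `W_B` for the segment `B = [a,b] ⊂ ℤ`. -/
noncomputable def Wseg (r : ℕ) (f : ℕ → ℝ → ℝ → ℝ) (a b : ℤ) (z : ℤ → ℝ) : ℝ :=
  ∑ i ∈ Finset.Icc a b, siteE r f z i

/-- A global minimizer: for every segment with interior `[a,b]` and every variation `v`
supported in `[a,b]`, the energy does not decrease. -/
def IsGlobalMin (r : ℕ) (f : ℕ → ℝ → ℝ → ℝ) (x : ℤ → ℝ) : Prop :=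
  ∀ a b : ℤ, ∀ v : ℤ → ℝ, (∀ i, v i ≠ 0 → i ∈ Finset.Icc a b) →
    Wseg r f (a - r) b x ≤ Wseg r f (a - r) b (x + v)

/-- The variational monotone recurrence relation `∑_{j=i-r}^{i} ∂_i S_j(x) = 0` at site `i`. -/
def SolvesEL (r : ℕ) (f : ℕ → ℝ → ℝ → ℝ) (x : ℤ → ℝ) (i : ℤ) : Prop :=
  (∑ j ∈ Finset.Icc 1 r, (d1 (f j) (x i) (x (i + j)) + d2 (f j) (x (i - j)) (x i))) = 0

/-- A local energy of range `r` in the sense of Definition 1.5 of the paper. -/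
structure LocalEnergy (r : ℕ) (K lam : ℝ) where
  f : ℕ → ℝ → ℝ → ℝ
  smooth : ∀ j, ContDiff ℝ 2 (fun p : ℝ × ℝ => f j p.1 p.2)
  periodic : ∀ j ν μ, f j (ν + 1) (μ + 1) = f j ν μ
  bound11 : ∀ j ν μ, |d11 (f j) ν μ| ≤ K / r
  bound12 : ∀ j ν μ, |d12 (f j) ν μ| ≤ K / r
  bound22 : ∀ j ν μ, |d22 (f j) ν μ| ≤ K / r
  coercive : ∀ j ∈ Finset.Icc 1 r, ∀ C : ℝ, ∃ R : ℝ, ∀ ν μ : ℝ, R ≤ |ν - μ| → C ≤ f j ν μ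
  twist : ∀ j ∈ Finset.Icc 1 r, ∀ ν μ : ℝ, d12 (f j) ν μ ≤ -lam

/-- `x` and `y` are weakly ordered on the set `s`. -/
def WOrd (x y : ℤ → ℝ) (s : Set ℤ) : Prop :=
  (∀ i ∈ s, x i ≤ y i) ∨ (∀ i ∈ s, y i ≤ x i)

/-- `D` is an interval outside of which (on both components of the complement)
`x` and `y` are weakly ordered. -/
def CrossProp (x y : ℤ → ℝ) (D : Set ℤ) : Prop :=
  D.OrdConnected ∧ WOrd x y {i | ∀ j ∈ D, i < j} ∧ WOrd x y {i | ∀ j ∈ D, j < i}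

/-- The domain of crossing of `x` and `y`: the minimal interval `D` such that `x` and `y`
are weakly ordered on the connected components of its complement. -/
def IsCrossingDomain (x y : ℤ → ℝ) (D : Set ℤ) : Prop :=
  CrossProp x y D ∧ ∀ D' : Set ℤ, CrossProp x y D' → D ⊆ D'

/-- The translation `(τ_{k,l} x)_i = x_{i-k} + l`. -/
def transl (k l : ℤ) (x : ℤ → ℝ) : ℤ → ℝ := fun i => x (i - k) + l

/-- The Birkhoff property. -/
def Birkhoff (x : ℤ → ℝ) : Prop :=
  ∀ k l : ℤ, (∀ i, transl k l x i ≤ x i) ∨ (∀ i, x i ≤ transl k l x i)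


lemma rect_lemma (f : ℝ → ℝ → ℝ) (hf : ContDiff ℝ 2 (fun p : ℝ × ℝ => f p.1 p.2))
    (h12 : ∀ ν μ : ℝ, d12 f ν μ ≤ 0) {a c : ℝ} (hac : a ≤ c) {b d : ℝ} (hdb : d ≤ b) :
    f c b - f a b ≤ f c d - f a d := by
  set F : ℝ × ℝ → ℝ := fun p => f p.1 p.2 with hF
  have hFd : Differentiable ℝ F := hf.differentiable (by norm_num)
  have hline : ∀ ν μ : ℝ, HasDerivAt (fun t => f ν t) (fderiv ℝ F (ν, μ) (0, 1)) μ := by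
    intro ν μ
    have h1 : HasDerivAt (fun t : ℝ => ((ν : ℝ), t)) ((0 : ℝ), (1 : ℝ)) μ :=
      HasDerivAt.prodMk (hasDerivAt_const μ ν) (hasDerivAt_id μ)
    exact ((hFd (ν, μ)).hasFDerivAt.comp_hasDerivAt μ h1)
  have hd2eq : ∀ ν μ : ℝ, d2 f ν μ = fderiv ℝ F (ν, μ) (0, 1) := fun ν μ =>
    (hline ν μ).deriv
  -- for each μ, ν ↦ d2 f ν μ is antitone
  have hanti : ∀ μ : ℝ, Antitone (fun ν => d2 f ν μ) := by
    intro μ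
    have h1 : ContDiff ℝ 1 (fun p : ℝ × ℝ => fderiv ℝ F p ((0 : ℝ), (1 : ℝ))) :=
      (hf.fderiv_right (le_refl 2)).clm_apply contDiff_const
    have hdiff : Differentiable ℝ (fun ν => d2 f ν μ) := by
      have : (fun ν : ℝ => d2 f ν μ) = (fun p : ℝ × ℝ => fderiv ℝ F p ((0 : ℝ), (1 : ℝ)))
          ∘ (fun ν : ℝ => (ν, μ)) := by
        funext ν; simp [hd2eq ν μ, Function.comp]
      rw [this]
      exact (h1.differentiable one_ne_zero).comp (differentiable_id.prodMk (differentiable_const μ))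
    exact antitone_of_deriv_nonpos hdiff (fun ν => h12 ν μ)
  -- μ ↦ f c μ - f a μ is antitone
  have hR : ∀ μ : ℝ, HasDerivAt (fun t => f c t - f a t)
      (d2 f c μ - d2 f a μ) μ := by
    intro μ
    have := (hline c μ).sub (hline a μ)
    rwa [hd2eq c μ, hd2eq a μ]
  have hRanti : Antitone (fun t => f c t - f a t) := by
    apply antitone_of_deriv_nonpos
    · exact fun μ => ((hR μ).differentiableAt)
    · intro μ
      rw [(hR μ).deriv]
      have := hanti μ hac
      simpa using this
  have := hRanti hdb
  simpa using this

lemma submod_lemma (f : ℝ → ℝ → ℝ) (hf : ContDiff ℝ 2 (fun p : ℝ × ℝ => f p.1 p.2))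
    (h12 : ∀ ν μ : ℝ, d12 f ν μ ≤ 0) (a b c d : ℝ) :
    f (max a c) (max b d) + f (min a c) (min b d) ≤ f a b + f c d := by
  rcases le_total a c with hac | hca <;> rcases le_total b d with hbd | hdb
  · rw [max_eq_right hac, max_eq_right hbd, min_eq_left hac, min_eq_left hbd]; linarith
  · rw [max_eq_right hac, max_eq_left hdb, min_eq_left hac, min_eq_right hdb]
    have := rect_lemma f hf h12 hac hdb
    linarith
  · rw [max_eq_left hca, max_eq_right hbd, min_eq_right hca, min_eq_left hbd]
    have := rect_lemma f hf h12 hca hbd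
    linarith
  · rw [max_eq_left hca, max_eq_left hdb, min_eq_right hca, min_eq_right hdb]

/-- Minimum–maximum principle: `W_B(M) + W_B(m) ≤ W_B(x) + W_B(y)` for the pointwise
maximum `M` and minimum `m` of two sequences, under the strong twist condition. -/
theorem stmt2 (r : ℕ) (hr : 1 ≤ r) (lam : ℝ) (hlam : 0 < lam)
    (f : ℕ → ℝ → ℝ → ℝ)
    (hsmooth : ∀ j, ContDiff ℝ 2 (fun p : ℝ × ℝ => f j p.1 p.2))
    (htwist : ∀ j ∈ Finset.Icc 1 r, ∀ ν μ : ℝ, d12 (f j) ν μ ≤ -lam)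
    (x y : ℤ → ℝ) (a b : ℤ) :
    Wseg r f a b (fun i => max (x i) (y i)) + Wseg r f a b (fun i => min (x i) (y i)) ≤
      Wseg r f a b x + Wseg r f a b y := by
  unfold Wseg siteE
  rw [← Finset.sum_add_distrib, ← Finset.sum_add_distrib]
  apply Finset.sum_le_sum
  intro i _
  rw [← Finset.sum_add_distrib, ← Finset.sum_add_distrib]
  apply Finset.sum_le_sum
  intro j hj
  exact submod_lemma (f j) (hsmooth j)
    (fun ν μ => le_trans (htwist j hj ν μ) (by linarith)) (x i) (x (i + j)) (y i) (y (i + j))
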